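/- Let X be a locally compact, Hausdorff, second countable topological space and μ a Radon measure on X. Then there exists a sequence (f_k) of compactly supported continuous real-valued functions on X such that for any measurable F : X → ℂ: if F·f_k is integrable with ∫ F f_k dμ = 0 for all k, then F = 0 μ-almost everywhere. -/

import Mathlib

open MeasureTheory Set Function Filter Topology

theorem exists_test_family {X : Type*} [TopologicalSpace X] [LocallyCompactSpace X]
    [T2Space X] [SecondCountableTopology X] :
    ∃ G : Set (X → ℝ), G.Countable ∧
      (∀ g ∈ G, Continuous g ∧ HasCompactSupport g ∧ (∀ x, g x ∈ Set.Icc (0:ℝ) 1)) ∧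
      (∀ K U : Set X, IsCompact K → IsOpen U → K ⊆ U →
        ∃ g ∈ G, ∃ V : Set X, IsOpen V ∧ K ⊆ V ∧ Set.EqOn g 1 V ∧ Function.support g ⊆ U) := by
  classical
  set B := TopologicalSpace.countableBasis X with hB
  have hBc : B.Countable := TopologicalSpace.countable_countableBasis X
  have hBb : TopologicalSpace.IsTopologicalBasis B := TopologicalSpace.isBasis_countableBasis X
  set S : Set (Set X) := Set.sUnion '' {t | t.Finite ∧ t ⊆ B} with hS
  have hSc : S.Countable := (Set.countable_setOf_finite_subset hBc).image _
  have hSopen : ∀ V ∈ S, IsOpen V := by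
    rintro V ⟨t, ⟨-, htB⟩, rfl⟩
    exact isOpen_sUnion fun b hb => hBb.isOpen (htB hb)
  have key : ∀ K U : Set X, IsCompact K → IsOpen U → K ⊆ U →
      ∃ V ∈ S, K ⊆ V ∧ IsCompact (closure V) ∧ closure V ⊆ U := by
    intro K U hK hU hKU
    have hx : ∀ x ∈ K, ∃ b, b ∈ B ∧ x ∈ b ∧ IsCompact (closure b) ∧ closure b ⊆ U := by
      intro x hxK
      obtain ⟨C, hC, hxC, hCU⟩ := exists_compact_subset hU (hKU hxK)
      obtain ⟨b, hbB, hxb, hbC⟩ := hBb.exists_subset_of_mem_open hxC isOpen_interior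
      have hcb : closure b ⊆ C :=
        (closure_mono hbC).trans (closure_minimal interior_subset hC.isClosed)
      exact ⟨b, hbB, hxb, hC.of_isClosed_subset isClosed_closure hcb, hcb.trans hCU⟩
    choose! b hbB hxb hbcomp hbU using hx
    obtain ⟨t, htK, hcov⟩ := hK.elim_nhds_subcover b
      (fun x hx => (hBb.isOpen (hbB x hx)).mem_nhds (hxb x hx))
    refine ⟨⋃ x ∈ t, b x, ?_, hcov, ?_, ?_⟩
    · refine ⟨b '' ↑t, ⟨(t.finite_toSet.image b), by
        rintro _ ⟨x, hx, rfl⟩; exact hbB x (htK x hx)⟩, by simp [Set.sUnion_image]⟩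
    · rw [t.closure_biUnion]
      exact t.isCompact_biUnion fun x hx => hbcomp x (htK x hx)
    · rw [t.closure_biUnion]
      exact Set.iUnion₂_subset fun x hx => hbU x (htK x hx)
  set P : Set (Set X × Set X) :=
    {p | p.1 ∈ S ∧ p.2 ∈ S ∧ closure p.1 ⊆ p.2 ∧ IsCompact (closure p.2)} with hP
  have hPc : P.Countable := (hSc.prod hSc).mono fun p hp => Set.mem_prod.mpr ⟨hp.1, hp.2.1⟩
  have hg : ∀ p ∈ P, ∃ g : X → ℝ, Continuous g ∧ HasCompactSupport g ∧
      (∀ x, g x ∈ Set.Icc (0:ℝ) 1) ∧ Set.EqOn g 1 (closure p.1) ∧ Function.support g ⊆ p.2 := by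
    rintro ⟨V, W⟩ ⟨hVS, hWS, hVW, hWc⟩
    have hVc : IsCompact (closure V) :=
      hWc.of_isClosed_subset isClosed_closure (hVW.trans subset_closure)
    obtain ⟨g, hg1, hg0, hgc, hgi⟩ := exists_continuous_one_zero_of_isCompact hVc
      (hSopen W hWS).isClosed_compl (disjoint_compl_right_iff_subset.mpr hVW)
    refine ⟨g, g.continuous, hgc, hgi, hg1, fun x hx => ?_⟩
    by_contra hxW
    exact hx (hg0 hxW)
  choose! gf hgf using hg
  refine ⟨gf '' P, hPc.image _, ?_, ?_⟩
  · rintro _ ⟨p, hp, rfl⟩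
    exact ⟨(hgf p hp).1, (hgf p hp).2.1, (hgf p hp).2.2.1⟩
  · intro K U hK hU hKU
    obtain ⟨W, hWS, hKW, hWc, hWU⟩ := key K U hK hU hKU
    obtain ⟨V, hVS, hKV, hVc, hVW⟩ := key K W hK (hSopen W hWS) hKW
    have hpP : (V, W) ∈ P := ⟨hVS, hWS, hVW, hWc⟩
    refine ⟨gf (V, W), ⟨(V, W), hpP, rfl⟩, V, hSopen V hVS, hKV, ?_, ?_⟩
    · exact (hgf _ hpP).2.2.2.1.mono subset_closure
    · exact (hgf _ hpP).2.2.2.2.trans (subset_closure.trans hWU)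

open scoped ENNReal


/-- Separation lemma: on a locally compact, Hausdorff, second countable space `X`
with a Radon measure `μ`, there is a sequence of compactly supported continuous
real functions `f_k` such that any measurable `F : X → ℂ` with `F·f_k` integrable
and `∫ F f_k dμ = 0` for all `k` vanishes μ-a.e. -/
theorem exists_separating_sequence
    {X : Type*} [TopologicalSpace X] [LocallyCompactSpace X] [T2Space X]
    [SecondCountableTopology X] [MeasurableSpace X] [BorelSpace X]
    (μ : Measure X) [μ.Regular] :
    ∃ f : ℕ → X → ℝ,
      (∀ k, Continuous (f k) ∧ HasCompactSupport (f k)) ∧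
      ∀ F : X → ℂ, Measurable F →
        (∀ k, Integrable (fun x => F x * (f k x : ℂ)) μ ∧
          ∫ x, F x * (f k x : ℂ) ∂μ = 0) →
        F =ᵐ[μ] 0 := by
  classical
  obtain ⟨G, hGc, hGprop, hGcov⟩ := exists_test_family (X := X)
  obtain ⟨f, hf⟩ := (hGc.insert (0 : X → ℝ)).exists_eq_range ⟨0, Set.mem_insert _ _⟩
  refine ⟨f, ?_, ?_⟩
  · intro k
    have hk : f k ∈ insert (0 : X → ℝ) G := hf ▸ Set.mem_range_self k
    rcases Set.mem_insert_iff.mp hk with h0 | hG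
    · rw [h0]; exact ⟨continuous_const, by simp [HasCompactSupport, tsupport]⟩
    · exact ⟨(hGprop _ hG).1, (hGprop _ hG).2.1⟩
  · intro F hF hint
    have hzero : ∀ g ∈ G, Integrable (fun x => F x * (g x : ℂ)) μ ∧
        ∫ x, F x * (g x : ℂ) ∂μ = 0 := by
      intro g hg
      have : g ∈ Set.range f := hf ▸ Set.mem_insert_of_mem _ hg
      obtain ⟨k, rfl⟩ := this
      exact hint k
    -- F is integrable on every compact set
    have claim1 : ∀ K : Set X, IsCompact K → IntegrableOn F K μ := by
      intro K hK
      obtain ⟨g, hgG, V, hVo, hKV, hgV, -⟩ :=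
        hGcov K Set.univ hK isOpen_univ (Set.subset_univ K)
      have hmeas : AEStronglyMeasurable (K.indicator F) μ :=
        (hF.indicator hK.measurableSet).aestronglyMeasurable
      have hb : ∀ x, ‖K.indicator F x‖ ≤ ‖F x * (g x : ℂ)‖ := by
        intro x
        by_cases hx : x ∈ K
        · have h1 : g x = 1 := hgV (hKV hx)
          simp [Set.indicator_of_mem hx, h1]
        · simp only [Set.indicator_of_notMem hx, norm_zero]
          positivity
      have hind : Integrable (K.indicator F) μ :=
        Integrable.mono' (hzero g hgG).1.norm hmeas (Filter.Eventually.of_forall hb)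
      exact (integrable_indicator_iff hK.measurableSet).mp hind
    -- the integral of F over every compact set vanishes
    have claim2 : ∀ K : Set X, IsCompact K → ∫ x in K, F x ∂μ = 0 := by
      intro K hK
      obtain ⟨g₀, hg₀G, V₀, hV₀o, hKV₀, hg₀V, -⟩ :=
        hGcov K Set.univ hK isOpen_univ (Set.subset_univ K)
      have hKfin : μ K ≠ ∞ := hK.measure_lt_top.ne
      have hU : ∀ j : ℕ, ∃ U, K ⊆ U ∧ IsOpen U ∧ μ U < μ K + (↑(j+1) : ℝ≥0∞)⁻¹ := by
        intro j
        obtain ⟨U, hKU, hUo, hUμ⟩ := Set.exists_isOpen_lt_add K hKfin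
          (ε := (↑(j+1) : ℝ≥0∞)⁻¹) (by simp)
        exact ⟨U, hKU, hUo, hUμ⟩
      choose U hKU hUo hUμ using hU
      set O : ℕ → Set X := fun j => V₀ ∩ ⋂ i ∈ Set.Iic j, U i with hO
      have hOo : ∀ j, IsOpen (O j) :=
        fun j => hV₀o.inter ((Set.finite_Iic j).isOpen_biInter fun i _ => hUo i)
      have hKO : ∀ j, K ⊆ O j :=
        fun j => Set.subset_inter hKV₀ (Set.subset_iInter₂ fun i _ => hKU i)
      have hOV₀ : ∀ j, O j ⊆ V₀ := fun j => Set.inter_subset_left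
      have hOanti : Antitone O := fun i j hij =>
        Set.inter_subset_inter_right _
          (Set.biInter_subset_biInter_left (Set.Iic_subset_Iic.mpr hij))
      have hOdiff : ∀ j, μ (O j \ K) ≤ (↑(j+1) : ℝ≥0∞)⁻¹ := by
        intro j
        have h1 : O j \ K ⊆ U j \ K := by
          refine Set.diff_subset_diff_left ?_
          exact Set.inter_subset_right.trans
            (Set.biInter_subset_of_mem (Set.mem_Iic.mpr le_rfl))
        calc μ (O j \ K) ≤ μ (U j \ K) := measure_mono h1
          _ = μ (U j) - μ K :=
            measure_diff (hKU j) hK.measurableSet.nullMeasurableSet hKfin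
          _ ≤ (↑(j+1) : ℝ≥0∞)⁻¹ := tsub_le_iff_left.mpr (hUμ j).le
      have hgj : ∀ j : ℕ, ∃ g, g ∈ G ∧ Set.EqOn g 1 K ∧ Function.support g ⊆ O j ∧
          ∀ x, g x ∈ Set.Icc (0:ℝ) 1 := by
        intro j
        obtain ⟨g, hgG, V, hVo, hKV, hgV, hgsupp⟩ := hGcov K (O j) hK (hOo j) (hKO j)
        exact ⟨g, hgG, fun x hx => hgV (hKV hx), hgsupp, (hGprop g hgG).2.2⟩
      choose g hgG hg1 hgsupp hgIcc using hgj
      have hN : μ ((⋂ j, O j) \ K) = 0 := by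
        by_contra hne
        obtain ⟨n, hn⟩ := ENNReal.exists_inv_nat_lt hne
        have h1 : μ ((⋂ j, O j) \ K) ≤ (↑(n+1) : ℝ≥0∞)⁻¹ :=
          le_trans (measure_mono (Set.diff_subset_diff_left (Set.iInter_subset _ n))) (hOdiff n)
        have h2 : ((n:ℝ≥0∞)+1)⁻¹ ≤ (↑n : ℝ≥0∞)⁻¹ :=
          ENNReal.inv_le_inv.mpr le_self_add
        push_cast at h1
        exact absurd ((h1.trans h2).trans_lt hn).false id
      have hglim : ∀ᵐ x ∂μ, Filter.Tendsto (fun j => F x * (g j x : ℂ)) Filter.atTop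
          (nhds (K.indicator F x)) := by
        filter_upwards [measure_eq_zero_iff_ae_notMem.mp hN] with x hx
        by_cases hxK : x ∈ K
        · have : ∀ j, F x * (g j x : ℂ) = K.indicator F x := by
            intro j
            rw [Set.indicator_of_mem hxK, hg1 j hxK]
            simp
          simpa [this] using tendsto_const_nhds (α := ℂ) (f := Filter.atTop (α := ℕ))
        · have hxO : ¬ x ∈ ⋂ j, O j := fun h => hx ⟨h, hxK⟩
          obtain ⟨J, hJ⟩ := by simpa [Set.mem_iInter] using hxO
          rw [Set.indicator_of_notMem hxK]
          refine Filter.Tendsto.congr' ?_ (tendsto_const_nhds (x := (0:ℂ)))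
          filter_upwards [Filter.eventually_ge_atTop J] with j hj
          have hxOj : x ∉ O j := fun h => hJ (hOanti hj h)
          have : g j x = 0 := by
            by_contra h
            exact hxOj (hgsupp j h)
          simp [this]
      have hbound : ∀ j, ∀ᵐ x ∂μ, ‖F x * (g j x : ℂ)‖ ≤ ‖F x * (g₀ x : ℂ)‖ := by
        intro j
        refine Filter.Eventually.of_forall fun x => ?_
        by_cases hgx : g j x = 0
        · simp only [hgx, Complex.ofReal_zero, mul_zero, norm_zero, norm_mul,
            Complex.norm_real]
          positivity
        · have hxV₀ : x ∈ V₀ := hOV₀ j (hgsupp j hgx)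
          have h0 : g₀ x = 1 := hg₀V hxV₀
          rw [norm_mul, norm_mul, Complex.norm_real, Complex.norm_real, h0, norm_one, mul_one]
          refine mul_le_of_le_one_right (norm_nonneg _) ?_
          rw [Real.norm_eq_abs, abs_of_nonneg (hgIcc j x).1]
          exact (hgIcc j x).2
      have hmeasj : ∀ j, AEStronglyMeasurable (fun x => F x * (g j x : ℂ)) μ := by
        intro j
        exact hF.aestronglyMeasurable.mul
          ((Complex.continuous_ofReal.comp (hGprop _ (hgG j)).1).aestronglyMeasurable)
      have hDCT := tendsto_integral_of_dominated_convergence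
        (fun x => ‖F x * (g₀ x : ℂ)‖) hmeasj (hzero g₀ hg₀G).1.norm hbound hglim
      have h0 : ∀ j, ∫ x, F x * (g j x : ℂ) ∂μ = 0 := fun j => (hzero (g j) (hgG j)).2
      have : ∫ x, K.indicator F x ∂μ = 0 := by
        refine tendsto_nhds_unique hDCT ?_
        simpa [h0] using tendsto_const_nhds (x := (0:ℂ)) (f := Filter.atTop (α := ℕ))
      rwa [integral_indicator hK.measurableSet] at this
    -- the integral of F over measurable sets contained in a compact set vanishes
    have claim3 : ∀ s : Set X, MeasurableSet s → (∃ K, IsCompact K ∧ s ⊆ K) →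
        ∫ x in s, F x ∂μ = 0 := by
      rintro s hs ⟨K, hK, hsK⟩
      have hsfin : μ s ≠ ∞ := ((measure_mono hsK).trans_lt hK.measure_lt_top).ne
      have hC : ∀ j : ℕ, ∃ C, C ⊆ s ∧ IsCompact C ∧ μ (s \ C) < (↑(j+1) : ℝ≥0∞)⁻¹ := by
        intro j
        obtain ⟨C, hCs, hCc, hCμ⟩ := hs.exists_isCompact_diff_lt hsfin
          (ε := (↑(j+1) : ℝ≥0∞)⁻¹) (by simp)
        exact ⟨C, hCs, hCc, hCμ⟩
      choose C hCs hCc hCμ using hC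
      set D : ℕ → Set X := fun j => ⋃ i ∈ Set.Iic j, C i with hD
      have hDc : ∀ j, IsCompact (D j) :=
        fun j => (Set.finite_Iic j).isCompact_biUnion fun i _ => hCc i
      have hDs : ∀ j, D j ⊆ s := fun j => Set.iUnion₂_subset fun i _ => hCs i
      have hDmono : Monotone D := fun i j hij =>
        Set.biUnion_subset_biUnion_left (Set.Iic_subset_Iic.mpr hij)
      have hDdiff : ∀ j, μ (s \ D j) ≤ (↑(j+1) : ℝ≥0∞)⁻¹ := by
        intro j
        refine le_trans (measure_mono (Set.diff_subset_diff_right ?_)) (hCμ j).le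
        exact Set.subset_biUnion_of_mem (Set.mem_Iic.mpr le_rfl)
      have hN : μ (s \ ⋃ j, D j) = 0 := by
        by_contra hne
        obtain ⟨n, hn⟩ := ENNReal.exists_inv_nat_lt hne
        have h1 : μ (s \ ⋃ j, D j) ≤ (↑(n+1) : ℝ≥0∞)⁻¹ :=
          le_trans (measure_mono (Set.diff_subset_diff_right (Set.subset_iUnion _ n))) (hDdiff n)
        have h2 : ((n:ℝ≥0∞)+1)⁻¹ ≤ (↑n : ℝ≥0∞)⁻¹ := ENNReal.inv_le_inv.mpr le_self_add
        push_cast at h1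
        exact absurd ((h1.trans h2).trans_lt hn).false id
      have hglim : ∀ᵐ x ∂μ, Filter.Tendsto (fun j => (D j).indicator F x) Filter.atTop
          (nhds (s.indicator F x)) := by
        filter_upwards [measure_eq_zero_iff_ae_notMem.mp hN] with x hx
        by_cases hxs : x ∈ s
        · have hxD : x ∈ ⋃ j, D j := by
            by_contra h
            exact hx ⟨hxs, h⟩
          obtain ⟨J, hJ⟩ := Set.mem_iUnion.mp hxD
          rw [Set.indicator_of_mem hxs]
          refine Filter.Tendsto.congr' ?_ (tendsto_const_nhds (x := F x))
          filter_upwards [Filter.eventually_ge_atTop J] with j hj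
          exact (Set.indicator_of_mem (hDmono hj hJ) F).symm
        · have : ∀ j, (D j).indicator F x = 0 :=
            fun j => Set.indicator_of_notMem (fun h => hxs (hDs j h)) F
          rw [Set.indicator_of_notMem hxs]
          simpa [this] using tendsto_const_nhds (x := (0:ℂ)) (f := Filter.atTop (α := ℕ))
      have hbound : ∀ j, ∀ᵐ x ∂μ, ‖(D j).indicator F x‖ ≤ ‖K.indicator F x‖ := by
        intro j
        refine Filter.Eventually.of_forall fun x => ?_
        by_cases hx : x ∈ D j
        · rw [Set.indicator_of_mem hx, Set.indicator_of_mem (hsK (hDs j hx))]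
        · simp [Set.indicator_of_notMem hx]
      have hmeasj : ∀ j, AEStronglyMeasurable (fun x => (D j).indicator F x) μ :=
        fun j => (hF.indicator (hDc j).measurableSet).aestronglyMeasurable
      have hKint : Integrable (K.indicator F) μ :=
        (integrable_indicator_iff hK.measurableSet).mpr (claim1 K hK)
      have hDCT := tendsto_integral_of_dominated_convergence
        (fun x => ‖K.indicator F x‖) hmeasj hKint.norm hbound hglim
      have h0 : ∀ j, ∫ x, (D j).indicator F x ∂μ = 0 := by
        intro j
        rw [integral_indicator (hDc j).measurableSet]
        exact claim2 (D j) (hDc j)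
      have : ∫ x, s.indicator F x ∂μ = 0 := by
        refine tendsto_nhds_unique hDCT ?_
        simpa [h0] using tendsto_const_nhds (x := (0:ℂ)) (f := Filter.atTop (α := ℕ))
      rwa [integral_indicator hs] at this
    -- conclude via σ-compactness
    set Kc : ℕ → Set X := compactCovering X with hKc
    have hKcc : ∀ n, IsCompact (Kc n) := isCompact_compactCovering X
    have hres : ∀ n, F =ᵐ[μ.restrict (Kc n)] 0 := by
      intro n
      have hfin : IsFiniteMeasure (μ.restrict (Kc n)) :=
        ⟨by rw [Measure.restrict_apply_univ]; exact (hKcc n).measure_lt_top⟩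
      refine ae_eq_zero_of_forall_setIntegral_eq_of_sigmaFinite ?_ ?_
      · intro s hs hsfin
        rw [IntegrableOn, Measure.restrict_restrict hs]
        exact (claim1 (Kc n) (hKcc n)).mono_set Set.inter_subset_right
      · intro s hs hsfin
        rw [Measure.restrict_restrict hs]
        exact claim3 _ (hs.inter (hKcc n).measurableSet)
          ⟨Kc n, hKcc n, Set.inter_subset_right⟩
    have hmeas : MeasurableSet {x | ¬ F x = (0 : X → ℂ) x} :=
      (hF (measurableSet_singleton (0:ℂ))).compl
    rw [Filter.EventuallyEq, ae_iff]
    have heq : {x | ¬ F x = (0 : X → ℂ) x} = ⋃ n, {x | ¬ F x = (0 : X → ℂ) x} ∩ Kc n := by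
      rw [← Set.inter_iUnion, iUnion_compactCovering, Set.inter_univ]
    rw [heq]
    refine le_antisymm (le_trans (measure_iUnion_le _) ?_) zero_le
    have hn : ∀ n, μ ({x | ¬ F x = (0 : X → ℂ) x} ∩ Kc n) = 0 := by
      intro n
      have h := hres n
      rw [Filter.EventuallyEq, ae_iff, Measure.restrict_apply hmeas] at h
      exact h
    simp only [Pi.zero_apply] at hn
    simp [hn]
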